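/- arXiv:0909.0083 — 2 statements merged into one kernel-verified Lean document; each statement's English description precedes it below -/
import Mathlib

section
/- Suppose an M×N real matrix Φ satisfies the RIP of order K+1 with isometry constant δ < 1/(3√K). Let x ∈ ℝ^N with ‖x‖₀ ≤ K and y = Φx. Consider any run of Orthogonal Matching Pursuit: a sequence of index sets Λ⁰ = ∅ and vectors defined for ℓ = 0,1,…,K−1 by: x^ℓ is a minimizer of ‖y − Φz‖₂ over all z ∈ ℝ^N with supp(z) ⊆ Λ^ℓ; r^ℓ = y − Φx^ℓ; h^ℓ = Φᵀ r^ℓ; j_ℓ is any index maximizing |h^ℓ(j)| over j ∈ {1,…,N}; and Λ^{ℓ+1} = Λ^ℓ ∪ {j_ℓ}. Then supp(x) ⊆ Λ^K, and the least-squares estimate x^K (the minimizer of ‖y − Φz‖₂ over z with supp(z) ⊆ Λ^K) equals x; that is, OMP exactly recovers x from y in K iterations. -/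
noncomputable section

namespace OMP

open Matrix Finset

/-- The support of a vector, as a `Finset`. -/
def supp {n : ℕ} (x : Fin n → ℝ) : Finset (Fin n) :=
  Finset.univ.filter fun j => x j ≠ 0

/-- The Euclidean (ℓ²) norm of a vector. -/
def l2 {n : ℕ} (x : Fin n → ℝ) : ℝ := Real.sqrt (∑ j, x j ^ 2)

/-- The ℓ^∞ norm of a vector. -/
def linf {n : ℕ} (x : Fin n → ℝ) : ℝ := ⨆ j, |x j|

/-- The standard inner product of two vectors. -/
def dotp {n : ℕ} (x y : Fin n → ℝ) : ℝ := ∑ j, x j * y j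

/-- The restriction of a vector to a set of indices (zero elsewhere). -/
def restr {n : ℕ} (Γ : Finset (Fin n)) (x : Fin n → ℝ) : Fin n → ℝ :=
  fun j => if j ∈ Γ then x j else 0

/-- The restricted isometry property of order `K` with isometry constant `δ`. -/
def RIP {M N : ℕ} (K : ℕ) (Φ : Matrix (Fin M) (Fin N) ℝ) (δ : ℝ) : Prop :=
  0 < δ ∧ δ < 1 ∧ ∀ x : Fin N → ℝ, (supp x).card ≤ K →
    (1 - δ) * l2 x ^ 2 ≤ l2 (Φ.mulVec x) ^ 2 ∧
      l2 (Φ.mulVec x) ^ 2 ≤ (1 + δ) * l2 x ^ 2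

/-- The span of the columns of `Φ` indexed by `Λ`, as a submodule of Euclidean space. -/
def colSpan {M N : ℕ} (Φ : Matrix (Fin M) (Fin N) ℝ) (Λ : Finset (Fin N)) :
    Submodule ℝ (EuclideanSpace ℝ (Fin M)) :=
  Submodule.span ℝ ((fun j => (WithLp.equiv 2 (Fin M → ℝ)).symm fun i => Φ i j) '' (Λ : Set (Fin N)))

/-- Orthogonal projection `P_Λ` onto the span of the columns of `Φ` indexed by `Λ`. -/
def projCol {M N : ℕ} (Φ : Matrix (Fin M) (Fin N) ℝ) (Λ : Finset (Fin N))
    (v : Fin M → ℝ) : Fin M → ℝ :=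
  WithLp.equiv 2 (Fin M → ℝ)
    (Submodule.orthogonalProjectionOnto (colSpan Φ Λ) ((WithLp.equiv 2 (Fin M → ℝ)).symm v) : EuclideanSpace ℝ (Fin M))

/-- The matrix `A_Λ = (I - P_Λ) Φ`: the columns of `Φ` orthogonalized against `colSpan Φ Λ`. -/
def Amat {M N : ℕ} (Φ : Matrix (Fin M) (Fin N) ℝ) (Λ : Finset (Fin N)) :
    Matrix (Fin M) (Fin N) ℝ :=
  Matrix.of fun i j => Φ i j - projCol Φ Λ (fun i' => Φ i' j) i


section Aux

lemma mem_supp {n : ℕ} {x : Fin n → ℝ} {j : Fin n} : j ∈ supp x ↔ x j ≠ 0 := by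
  simp [supp]

lemma not_mem_supp {n : ℕ} {x : Fin n → ℝ} {j : Fin n} (h : j ∉ supp x) : x j = 0 := by
  by_contra hc; exact h (mem_supp.mpr hc)

lemma l2_nonneg {n : ℕ} (x : Fin n → ℝ) : 0 ≤ l2 x := Real.sqrt_nonneg _

lemma l2_sq {n : ℕ} (x : Fin n → ℝ) : l2 x ^ 2 = ∑ j, x j ^ 2 :=
  Real.sq_sqrt (Finset.sum_nonneg fun j _ => sq_nonneg _)

lemma eq_zero_of_sum_sq {n : ℕ} {x : Fin n → ℝ} (h : ∑ j, x j ^ 2 ≤ 0) : x = 0 := by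
  funext j
  have h2 : ∑ j, x j ^ 2 = 0 :=
    le_antisymm h (Finset.sum_nonneg fun j _ => sq_nonneg _)
  have := (Finset.sum_eq_zero_iff_of_nonneg (fun j _ => sq_nonneg (x j))).mp h2 j (by simp)
  exact pow_eq_zero_iff (by norm_num) |>.mp this

lemma eq_zero_of_l2 {n : ℕ} {x : Fin n → ℝ} (h : l2 x ≤ 0) : x = 0 := by
  apply eq_zero_of_sum_sq
  have h0 : l2 x = 0 := le_antisymm h (l2_nonneg x)
  have := l2_sq x
  rw [h0] at this; nlinarith [this]

lemma l2_pos {n : ℕ} {x : Fin n → ℝ} (h : x ≠ 0) : 0 < l2 x := by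
  rcases lt_or_ge 0 (l2 x) with h1 | h1
  · exact h1
  · exact absurd (eq_zero_of_l2 h1) h

lemma adj {M N : ℕ} (Φ : Matrix (Fin M) (Fin N) ℝ) (r : Fin M → ℝ) (u : Fin N → ℝ) :
    ∑ j, Φᵀ.mulVec r j * u j = ∑ i, Φ.mulVec u i * r i := by
  simp only [Matrix.mulVec, dotProduct, Matrix.transpose_apply, Finset.sum_mul]
  rw [Finset.sum_comm]
  exact Finset.sum_congr rfl fun i _ => Finset.sum_congr rfl fun j _ => by ring

lemma mulVec_ite {M N : ℕ} (Φ : Matrix (Fin M) (Fin N) ℝ) (j : Fin N) (t : ℝ) :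
    Φ.mulVec (fun k => if k = j then t else 0) = fun i => t * Φ i j := by
  funext i
  simp [Matrix.mulVec, dotProduct, mul_ite, Finset.sum_ite_eq', mul_comm]

lemma sum_add_sq {m : ℕ} (v w : Fin m → ℝ) :
    ∑ i, (v i + w i) ^ 2 = (∑ i, v i ^ 2) + 2 * (∑ i, v i * w i) + ∑ i, w i ^ 2 := by
  rw [Finset.mul_sum, ← Finset.sum_add_distrib, ← Finset.sum_add_distrib]
  exact Finset.sum_congr rfl fun i _ => by ring

lemma sum_sub_sq {m : ℕ} (v w : Fin m → ℝ) :
    ∑ i, (v i - w i) ^ 2 = (∑ i, v i ^ 2) - 2 * (∑ i, v i * w i) + ∑ i, w i ^ 2 := by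
  rw [Finset.mul_sum, ← Finset.sum_sub_distrib, ← Finset.sum_add_distrib]
  exact Finset.sum_congr rfl fun i _ => by ring

variable {M N K : ℕ} {Φ : Matrix (Fin M) (Fin N) ℝ} {δ : ℝ}

/-- RIP injectivity on (K+1)-sparse vectors. -/
lemma rip_zero (hRIP : RIP (K + 1) Φ δ) {u : Fin N → ℝ}
    (hu : (supp u).card ≤ K + 1) (h0 : Φ.mulVec u = 0) : u = 0 := by
  obtain ⟨hδ0, hδ1, hR⟩ := hRIP
  have h1 := (hR u hu).1
  rw [h0] at h1
  have h2 : l2 (0 : Fin M → ℝ) ^ 2 = 0 := by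
    rw [l2_sq]; simp
  rw [h2] at h1
  have h3 : l2 u ^ 2 ≤ 0 := by nlinarith
  rw [l2_sq] at h3
  exact eq_zero_of_sum_sq h3

/-- Off-support coherence bound. -/
lemma cross (hRIP : RIP (K + 1) Φ δ) {u : Fin N → ℝ} (hu : (supp u).card ≤ K)
    {j : Fin N} (hj : j ∉ supp u) :
    |∑ i, Φ.mulVec u i * Φ i j| ≤ δ * l2 u := by
  obtain ⟨hδ0, hδ1, hR⟩ := hRIP
  by_cases h0 : u = 0
  · subst h0
    simp [Matrix.mulVec_zero]
    exact mul_nonneg hδ0.le (l2_nonneg _)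
  set t := l2 u with ht
  have htpos : 0 < t := l2_pos h0
  set b : Fin N → ℝ := fun k => if k = j then t else 0 with hb
  have hbj : ∀ k, k ≠ j → b k = 0 := fun k hk => by simp [hb, hk]
  have huj : u j = 0 := not_mem_supp hj
  -- supports
  have hsupp_pb : ∀ (s : ℝ), supp (fun k => u k + s * b k) ⊆ insert j (supp u) := by
    intro s k hk
    rw [mem_supp] at hk
    rcases eq_or_ne k j with rfl | hkj
    · exact Finset.mem_insert_self _ _
    · rw [hbj k hkj, mul_zero, add_zero] at hk
      exact Finset.mem_insert_of_mem (mem_supp.mpr hk)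
  have hcard : ∀ (s : ℝ), (supp (fun k => u k + s * b k)).card ≤ K + 1 := by
    intro s
    calc (supp (fun k => u k + s * b k)).card ≤ (insert j (supp u)).card :=
          Finset.card_le_card (hsupp_pb s)
      _ ≤ (supp u).card + 1 := Finset.card_insert_le _ _
      _ ≤ K + 1 := by omega
  -- l2 norms of u ± b
  have hl2pm : ∀ s : ℝ, s = 1 ∨ s = -1 → ∑ k, (u k + s * b k) ^ 2 = 2 * t ^ 2 := by
    intro s hs
    have : ∀ k, (u k + s * b k) ^ 2 = u k ^ 2 + 2 * s * (u k * b k) + s ^ 2 * b k ^ 2 := by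
      intro k; ring
    rw [Finset.sum_congr rfl fun k _ => this k]
    rw [Finset.sum_add_distrib, Finset.sum_add_distrib, ← Finset.mul_sum, ← Finset.mul_sum]
    have hub : ∑ k, u k * b k = 0 := by
      apply Finset.sum_eq_zero; intro k _
      rcases eq_or_ne k j with rfl | hkj
      · rw [huj, zero_mul]
      · rw [hbj k hkj, mul_zero]
    have hbb : ∑ k, b k ^ 2 = t ^ 2 := by
      simp [hb, ite_pow, Finset.sum_ite_eq']
    have huu : ∑ k, u k ^ 2 = t ^ 2 := (l2_sq u).symm
    have hs2 : s ^ 2 = 1 := by rcases hs with rfl | rfl <;> norm_num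
    rw [hub, hbb, huu, hs2]; ring
  -- mulVec of b
  have hΦb : Φ.mulVec b = fun i => t * Φ i j := mulVec_ite Φ j t
  set c := ∑ i, Φ.mulVec u i * Φ i j with hc
  -- expansions of ‖Φ(u ± b)‖²
  have hexp : ∀ s : ℝ, l2 (Φ.mulVec (fun k => u k + s * b k)) ^ 2
      = (∑ i, Φ.mulVec u i ^ 2) + 2 * s * t * c + s ^ 2 * t ^ 2 * ∑ i, Φ i j ^ 2 := by
    intro s
    have hv : Φ.mulVec (fun k => u k + s * b k) = fun i => Φ.mulVec u i + s * (t * Φ i j) := by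
      have : (fun k => u k + s * b k) = u + s • b := by funext k; simp [Pi.smul_apply, smul_eq_mul]
      rw [this, Matrix.mulVec_add, Matrix.mulVec_smul, hΦb]
      funext i; simp [Pi.smul_apply, smul_eq_mul]
    rw [hv, l2_sq, hc, Finset.mul_sum, Finset.mul_sum, ← Finset.sum_add_distrib,
      ← Finset.sum_add_distrib]
    exact Finset.sum_congr rfl fun i _ => by ring
  -- RIP bounds for u + b and u - b
  have hp := hR (fun k => u k + (1:ℝ) * b k) (hcard 1)
  have hm := hR (fun k => u k + (-1:ℝ) * b k) (hcard (-1))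
  rw [hexp 1] at hp
  rw [hexp (-1)] at hm
  have hl2p : l2 (fun k => u k + (1:ℝ) * b k) ^ 2 = 2 * t ^ 2 := by
    rw [l2_sq]; exact hl2pm 1 (Or.inl rfl)
  have hl2m : l2 (fun k => u k + (-1:ℝ) * b k) ^ 2 = 2 * t ^ 2 := by
    rw [l2_sq]; exact hl2pm (-1) (Or.inr rfl)
  rw [hl2p] at hp
  rw [hl2m] at hm
  -- combine
  have h1 : t * c ≤ δ * t ^ 2 := by nlinarith [hp.2, hm.1]
  have h2 : -(δ * t ^ 2) ≤ t * c := by nlinarith [hp.1, hm.2]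
  rw [abs_le]
  constructor
  · nlinarith
  · nlinarith

/-- Orthogonality of the least-squares residual to in-support columns. -/
lemma ortho {y : Fin M → ℝ} {Λ : Finset (Fin N)} {w : Fin N → ℝ}
    (hw : supp w ⊆ Λ)
    (hmin : ∀ z : Fin N → ℝ, supp z ⊆ Λ →
      l2 (y - Φ.mulVec w) ≤ l2 (y - Φ.mulVec z))
    {j : Fin N} (hj : j ∈ Λ) :
    Φᵀ.mulVec (y - Φ.mulVec w) j = 0 := by
  set r : Fin M → ℝ := y - Φ.mulVec w with hr
  set c : ℝ := ∑ i, r i * Φ i j with hc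
  set S : ℝ := ∑ i, (Φ i j) ^ 2 with hS
  have hSnn : 0 ≤ S := Finset.sum_nonneg fun i _ => sq_nonneg _
  -- the perturbation inequality
  have key : ∀ t : ℝ, 0 ≤ -(2 * t * c) + t ^ 2 * S := by
    intro t
    set z : Fin N → ℝ := fun k => if k = j then w k + t else w k with hz
    have hzsupp : supp z ⊆ Λ := by
      intro k hk
      rcases eq_or_ne k j with rfl | hkj
      · exact hj
      · rw [mem_supp] at hk
        simp only [hz, if_neg hkj] at hk
        exact hw (mem_supp.mpr hk)
    have hle := hmin z hzsupp
    have hzw : z = fun k => w k + (if k = j then t else 0) := by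
      funext k; by_cases hkj : k = j <;> simp [hz, hkj]
    have hΦz : Φ.mulVec z = fun i => Φ.mulVec w i + t * Φ i j := by
      rw [hzw]
      have : (fun k => w k + (if k = j then t else 0))
          = w + fun k => if k = j then t else 0 := rfl
      rw [this, Matrix.mulVec_add, mulVec_ite]
      rfl
    have hres : y - Φ.mulVec z = fun i => r i - t * Φ i j := by
      funext i
      simp [hΦz, hr, Pi.sub_apply]
      ring
    have hsq : l2 r ^ 2 ≤ l2 (y - Φ.mulVec z) ^ 2 :=
      pow_le_pow_left₀ (l2_nonneg r) hle 2
    rw [hres, l2_sq, l2_sq] at hsq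
    have hexp : ∑ i, (r i - t * Φ i j) ^ 2
        = (∑ i, r i ^ 2) - 2 * t * c + t ^ 2 * S := by
      rw [hc, hS, Finset.mul_sum, Finset.mul_sum, ← Finset.sum_sub_distrib,
        ← Finset.sum_add_distrib]
      exact Finset.sum_congr rfl fun i _ => by ring
    rw [hexp] at hsq
    linarith
  -- conclude c = 0
  have hc0 : c = 0 := by
    by_contra hc0
    have h1 := key (c / (S + 1))
    have hS1 : 0 < S + 1 := by linarith
    have hcsq : 0 < c ^ 2 := by positivity
    have : -(2 * (c / (S + 1)) * c) + (c / (S + 1)) ^ 2 * S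
        = -(c ^ 2 * (S + 2)) / (S + 1) ^ 2 := by
      field_simp
      ring
    rw [this] at h1
    have h2 : 0 < c ^ 2 * (S + 2) := by positivity
    have h3 : 0 < (S + 1) ^ 2 := by positivity
    have h4 : -(c ^ 2 * (S + 2)) / (S + 1) ^ 2 = -(c ^ 2 * (S + 2) / (S + 1) ^ 2) := by
      ring
    rw [h4] at h1
    linarith [div_pos h2 h3]
  -- translate to the transpose statement
  have : Φᵀ.mulVec r j = c := by
    rw [hc]
    simp only [Matrix.mulVec, dotProduct, Matrix.transpose_apply]
    exact Finset.sum_congr rfl fun i _ => by ring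
  rw [this, hc0]

/-- OMP selects an index inside the true support. -/
lemma select (hRIP : RIP (K + 1) Φ δ) (hδ : δ < 1 / (3 * Real.sqrt K))
    {u : Fin N → ℝ} (hu0 : u ≠ 0) {S : Finset (Fin N)} (hUS : supp u ⊆ S)
    (hS : S.card ≤ K) {js : Fin N}
    (hmax : ∀ j, |(Φᵀ.mulVec (Φ.mulVec u)) j| ≤ |(Φᵀ.mulVec (Φ.mulVec u)) js|) :
    js ∈ S ∧ 0 < |(Φᵀ.mulVec (Φ.mulVec u)) js| := by
  obtain ⟨hδ0, hδ1, hR⟩ := hRIP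
  set h : Fin N → ℝ := Φᵀ.mulVec (Φ.mulVec u) with hh
  set T : Finset (Fin N) := supp u with hT
  have hTne : T.Nonempty := by
    by_contra hne
    rw [Finset.not_nonempty_iff_eq_empty] at hne
    apply hu0
    funext k
    by_contra hk
    have : k ∈ T := mem_supp.mpr hk
    simp [hne] at this
  have hTK : T.card ≤ K := le_trans (Finset.card_le_card hUS) hS
  have hK1 : 1 ≤ K := le_trans (Finset.card_pos.mpr hTne) hTK
  have hsK : (1:ℝ) ≤ Real.sqrt K := by
    rw [show (1:ℝ) = Real.sqrt 1 by simp]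
    exact Real.sqrt_le_sqrt (by exact_mod_cast hK1)
  have hsKpos : 0 < Real.sqrt K := lt_of_lt_of_le one_pos hsK
  have hδK : δ * Real.sqrt K < 1 / 3 := by
    rw [lt_div_iff₀ (by positivity : (0:ℝ) < 3 * Real.sqrt K)] at hδ
    nlinarith
  have hδ3 : δ < 1 / 3 := by nlinarith
  have lpos : 0 < l2 u := l2_pos hu0
  set B : ℝ := |h js| with hB
  have hBnn : 0 ≤ B := abs_nonneg _
  -- lower bound: (1-δ) ‖u‖² ≤ ∑_{j∈T} h j * u j
  have key1 : (1 - δ) * l2 u ^ 2 ≤ ∑ j ∈ T, h j * u j := by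
    have e1 : ∑ j ∈ T, h j * u j = ∑ j, h j * u j := by
      apply Finset.sum_subset (Finset.subset_univ T)
      intro k _ hk
      rw [hT] at hk
      rw [not_mem_supp hk, mul_zero]
    have e2 : ∑ j, h j * u j = l2 (Φ.mulVec u) ^ 2 := by
      rw [hh, adj, l2_sq]
      exact Finset.sum_congr rfl fun i _ => by ring
    rw [e1, e2]
    exact (hR u (le_trans hTK (by omega))).1
  -- upper bound: ∑_{j∈T} h j * u j ≤ B * (√K * l2 u)
  have key2 : ∑ j ∈ T, h j * u j ≤ B * (Real.sqrt K * l2 u) := by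
    have s1 : ∑ j ∈ T, h j * u j ≤ ∑ j ∈ T, B * |u j| := by
      apply Finset.sum_le_sum
      intro j _
      calc h j * u j ≤ |h j * u j| := le_abs_self _
        _ = |h j| * |u j| := abs_mul _ _
        _ ≤ B * |u j| := mul_le_mul_of_nonneg_right (hmax j) (abs_nonneg _)
    have s2 : ∑ j ∈ T, |u j| ≤ Real.sqrt K * l2 u := by
      have cs : (∑ j ∈ T, |u j|) ^ 2 ≤ (K : ℝ) * l2 u ^ 2 := by
        have := sq_sum_le_card_mul_sum_sq (s := T) (f := fun j => |u j|)
        have e3 : ∑ j ∈ T, |u j| ^ 2 ≤ l2 u ^ 2 := by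
          rw [l2_sq]
          have : ∀ j ∈ T, |u j| ^ 2 = u j ^ 2 := fun j _ => sq_abs _
          rw [Finset.sum_congr rfl this]
          exact Finset.sum_le_sum_of_subset_of_nonneg (Finset.subset_univ T)
            fun j _ _ => sq_nonneg _
        calc (∑ j ∈ T, |u j|) ^ 2 ≤ (T.card : ℝ) * ∑ j ∈ T, |u j| ^ 2 := this
          _ ≤ (K : ℝ) * l2 u ^ 2 := by
              apply mul_le_mul (by exact_mod_cast hTK) e3
                (Finset.sum_nonneg fun j _ => sq_nonneg _) (Nat.cast_nonneg K)
      have hnn : 0 ≤ ∑ j ∈ T, |u j| := Finset.sum_nonneg fun j _ => abs_nonneg _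
      have hb : 0 ≤ Real.sqrt K * l2 u := by positivity
      have cs2 : (∑ j ∈ T, |u j|) ^ 2 ≤ (Real.sqrt K * l2 u) ^ 2 := by
        rw [mul_pow, Real.sq_sqrt (Nat.cast_nonneg K : (0:ℝ) ≤ K)]
        exact cs
      exact (pow_le_pow_iff_left₀ hnn hb two_ne_zero).mp cs2
    calc ∑ j ∈ T, h j * u j ≤ ∑ j ∈ T, B * |u j| := s1
      _ = B * ∑ j ∈ T, |u j| := by rw [Finset.mul_sum]
      _ ≤ B * (Real.sqrt K * l2 u) := mul_le_mul_of_nonneg_left s2 hBnn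
  -- B is strictly positive
  have hBpos : 0 < B := by
    rcases lt_or_ge 0 B with h1 | h1
    · exact h1
    · exfalso
      have : B = 0 := le_antisymm h1 hBnn
      rw [this] at key2
      nlinarith
  refine ⟨?_, hBpos⟩
  by_contra hjs
  have hjsT : js ∉ T := fun hmem => hjs (hUS hmem)
  have hcrossb : B ≤ δ * l2 u := by
    have e4 : h js = ∑ i, Φ.mulVec u i * Φ i js := by
      rw [hh]
      simp only [Matrix.mulVec, dotProduct, Matrix.transpose_apply]
      exact Finset.sum_congr rfl fun i _ => by ring
    rw [hB, e4]
    exact cross ⟨hδ0, hδ1, hR⟩ hTK hjsT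
  have c1 : B * (Real.sqrt K * l2 u) ≤ δ * l2 u * (Real.sqrt K * l2 u) :=
    mul_le_mul_of_nonneg_right hcrossb (by positivity)
  nlinarith [mul_pos lpos lpos, mul_lt_mul_of_pos_right hδK (mul_pos lpos lpos)]

end Aux

/-- exact recovery of `K`-sparse signals by OMP under the RIP of order
`K + 1` with `δ < 1/(3√K)`. -/
theorem stmt7 {M N K : ℕ} (Φ : Matrix (Fin M) (Fin N) ℝ) (δ : ℝ) (x : Fin N → ℝ)
    (hRIP : RIP (K + 1) Φ δ) (hδ : δ < 1 / (3 * Real.sqrt K))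
    (hsp : (supp x).card ≤ K)
    (y : Fin M → ℝ) (hy : y = Φ.mulVec x)
    (Λ : ℕ → Finset (Fin N)) (xs : ℕ → Fin N → ℝ) (jsel : ℕ → Fin N)
    (hΛ0 : Λ 0 = ∅)
    (hls : ∀ ℓ ≤ K, supp (xs ℓ) ⊆ Λ ℓ ∧
      ∀ z : Fin N → ℝ, supp z ⊆ Λ ℓ →
        l2 (y - Φ.mulVec (xs ℓ)) ≤ l2 (y - Φ.mulVec z))
    (hsel : ∀ ℓ < K, ∀ j : Fin N,
      |(Φᵀ.mulVec (y - Φ.mulVec (xs ℓ))) j| ≤ |(Φᵀ.mulVec (y - Φ.mulVec (xs ℓ))) (jsel ℓ)|)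
    (hstep : ∀ ℓ < K, Λ (ℓ + 1) = insert (jsel ℓ) (Λ ℓ)) :
    supp x ⊆ Λ K ∧ xs K = x := by
  -- cardinality bound on the index sets
  have hcard : ∀ ℓ, ℓ ≤ K → (Λ ℓ).card ≤ ℓ := by
    intro ℓ
    induction ℓ with
    | zero => intro _; simp [hΛ0]
    | succ n ih =>
      intro hn
      rw [hstep n (by omega)]
      have h1 := ih (by omega)
      calc (insert (jsel n) (Λ n)).card ≤ (Λ n).card + 1 := Finset.card_insert_le _ _
        _ ≤ n + 1 := by omega
  -- main invariant
  have hinv : ∀ ℓ, ℓ ≤ K → supp x ⊆ Λ ℓ ∨ (Λ ℓ ⊆ supp x ∧ (Λ ℓ).card = ℓ) := by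
    intro ℓ
    induction ℓ with
    | zero =>
      intro _
      right
      rw [hΛ0]
      exact ⟨Finset.empty_subset _, rfl⟩
    | succ n ih =>
      intro hn
      have hnK : n < K := by omega
      rcases ih (by omega) with hL | ⟨hR1, hR2⟩
      · left
        rw [hstep n hnK]
        exact hL.trans (Finset.subset_insert _ _)
      · set u : Fin N → ℝ := x - xs n with hu
        by_cases hu0 : u = 0
        · left
          have hxx : x = xs n := by rwa [sub_eq_zero] at hu0
          rw [hstep n hnK]
          intro k hk
          apply Finset.mem_insert_of_mem
          apply (hls n (by omega)).1
          rwa [← hxx]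
        · right
          -- supp u ⊆ supp x
          have hsuppu : supp u ⊆ supp x := by
            intro k hk
            rw [mem_supp] at hk ⊢
            intro hxk
            apply hk
            have hxs : xs n k = 0 := by
              by_contra hne
              have h1 : k ∈ Λ n := (hls n (by omega)).1 (mem_supp.mpr hne)
              exact (mem_supp.mp (hR1 h1)) hxk
            simp [hu, Pi.sub_apply, hxk, hxs]
          -- residual is Φ u
          have hr : y - Φ.mulVec (xs n) = Φ.mulVec u := by
            rw [hy, hu, Matrix.mulVec_sub]
          have hsel' := hsel n hnK
          rw [hr] at hsel'
          obtain ⟨hjS, hjpos⟩ := select hRIP hδ hu0 hsuppu hsp hsel'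
          -- the selected index is new
          have hnotin : jsel n ∉ Λ n := by
            intro hmem
            have h0 := ortho (Φ := Φ) (y := y) (hls n (by omega)).1
              (hls n (by omega)).2 hmem
            rw [hr] at h0
            rw [h0] at hjpos
            simp at hjpos
          constructor
          · rw [hstep n hnK]
            exact Finset.insert_subset hjS hR1
          · rw [hstep n hnK, Finset.card_insert_of_notMem hnotin, hR2]
  -- conclude supp x ⊆ Λ K
  have hsub : supp x ⊆ Λ K := by
    rcases hinv K le_rfl with h | ⟨h1, h2⟩
    · exact h
    · have : Λ K = supp x := Finset.eq_of_subset_of_card_le h1 (by rw [h2]; exact hsp)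
      rw [this]
  refine ⟨hsub, ?_⟩
  -- the final residual is zero
  have hy0 : y - Φ.mulVec x = 0 := by rw [hy]; simp
  have h0 : l2 (y - Φ.mulVec (xs K)) ≤ 0 := by
    have h1 := (hls K le_rfl).2 x hsub
    rw [hy0] at h1
    have h2 : l2 (0 : Fin M → ℝ) = 0 := by simp [l2]
    rw [h2] at h1
    exact h1
  have hres : y - Φ.mulVec (xs K) = 0 := eq_zero_of_l2 h0
  have hΦeq : Φ.mulVec (xs K - x) = 0 := by
    rw [Matrix.mulVec_sub]
    have h3 : Φ.mulVec (xs K) = y := by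
      have := sub_eq_zero.mp hres
      exact this.symm
    rw [h3]
    exact hy0
  have hcs : (supp (xs K - x)).card ≤ K + 1 := by
    have hs1 : supp (xs K - x) ⊆ Λ K := by
      intro k hk
      rw [mem_supp] at hk
      by_cases h1 : xs K k = 0
      · have h2 : x k ≠ 0 := by
          intro h2
          apply hk
          simp [Pi.sub_apply, h1, h2]
        exact hsub (mem_supp.mpr h2)
      · exact (hls K le_rfl).1 (mem_supp.mpr h1)
    calc (supp (xs K - x)).card ≤ (Λ K).card := Finset.card_le_card hs1
      _ ≤ K := hcard K le_rfl
      _ ≤ K + 1 := by omega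
  have hfin := rip_zero hRIP hcs hΦeq
  rwa [sub_eq_zero] at hfin


end OMP
end
end

section
/- Let Γ ⊂ {1,…,N} and x ∈ ℝ^N be given. If an M×N real matrix Ψ satisfies the RIP of order |supp(x) ∪ Γ| with isometry constant δ, then ‖(ΨᵀΨx)|_Γ − x|_Γ‖₂ ≤ δ‖x‖₂. -/
noncomputable section

namespace OMP

open Matrix Finset

set_option linter.unnecessarySeqFocus false

lemma supp_add_subset {n : ℕ} (u v : Fin n → ℝ) : supp (u + v) ⊆ supp u ∪ supp v := by
  intro j hj
  simp only [supp, Finset.mem_filter, Finset.mem_union, Finset.mem_univ, true_and,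
    Pi.add_apply] at *
  by_contra h
  push_neg at h
  simp [h.1, h.2] at hj

lemma supp_sub_subset {n : ℕ} (u v : Fin n → ℝ) : supp (u - v) ⊆ supp u ∪ supp v := by
  intro j hj
  simp only [supp, Finset.mem_filter, Finset.mem_union, Finset.mem_univ, true_and,
    Pi.sub_apply] at *
  by_contra h
  push_neg at h
  simp [h.1, h.2] at hj

lemma dotp_transpose {M N : ℕ} (Ψ : Matrix (Fin M) (Fin N) ℝ) (u : Fin N → ℝ)
    (z : Fin M → ℝ) : dotp u (Ψᵀ.mulVec z) = dotp (Ψ.mulVec u) z := by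
  simp only [dotp, mulVec, dotProduct, transpose_apply, Finset.mul_sum, Finset.sum_mul]
  rw [Finset.sum_comm]
  exact Finset.sum_congr rfl fun i _ => Finset.sum_congr rfl fun j _ => by ring

lemma polar {M N K : ℕ} (Ψ : Matrix (Fin M) (Fin N) ℝ) (δ : ℝ)
    (h : RIP K Ψ δ) (u v : Fin N → ℝ) (hc : (supp u ∪ supp v).card ≤ K) :
    dotp (Ψ.mulVec u) (Ψ.mulVec v) - dotp u v
      ≤ δ * (∑ j, u j ^ 2 + ∑ j, v j ^ 2) / 2 := by
  obtain ⟨hδ0, hδ1, hK⟩ := h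
  have hadd := hK (u + v) (le_trans (Finset.card_le_card (supp_add_subset u v)) hc)
  have hsub := hK (u - v) (le_trans (Finset.card_le_card (supp_sub_subset u v)) hc)
  have e1 : l2 (u + v) ^ 2 = ∑ j, u j ^ 2 + 2 * dotp u v + ∑ j, v j ^ 2 := by
    rw [l2_sq]
    simp only [Pi.add_apply, dotp, Finset.mul_sum]
    rw [← Finset.sum_add_distrib, ← Finset.sum_add_distrib]
    exact Finset.sum_congr rfl fun j _ => by ring
  have e2 : l2 (u - v) ^ 2 = ∑ j, u j ^ 2 - 2 * dotp u v + ∑ j, v j ^ 2 := by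
    rw [l2_sq, show (∑ j, (u - v) j ^ 2) = ∑ j, (u j ^ 2 + v j ^ 2 - 2 * (u j * v j))
      from Finset.sum_congr rfl fun j _ => by simp [Pi.sub_apply]; ring,
      Finset.sum_sub_distrib, Finset.sum_add_distrib, ← Finset.mul_sum]
    simp only [dotp]; ring
  have e3 : l2 (Ψ.mulVec (u + v)) ^ 2
      = l2 (Ψ.mulVec u) ^ 2 + 2 * dotp (Ψ.mulVec u) (Ψ.mulVec v) + l2 (Ψ.mulVec v) ^ 2 := by
    rw [Matrix.mulVec_add, l2_sq, l2_sq, l2_sq]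
    simp only [Pi.add_apply, dotp, Finset.mul_sum]
    rw [← Finset.sum_add_distrib, ← Finset.sum_add_distrib]
    exact Finset.sum_congr rfl fun j _ => by ring
  have e4 : l2 (Ψ.mulVec (u - v)) ^ 2
      = l2 (Ψ.mulVec u) ^ 2 - 2 * dotp (Ψ.mulVec u) (Ψ.mulVec v) + l2 (Ψ.mulVec v) ^ 2 := by
    rw [Matrix.mulVec_sub, l2_sq, l2_sq, l2_sq,
      show (∑ j, (Ψ.mulVec u - Ψ.mulVec v) j ^ 2)
          = ∑ j, ((Ψ.mulVec u) j ^ 2 + (Ψ.mulVec v) j ^ 2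
              - 2 * ((Ψ.mulVec u) j * (Ψ.mulVec v) j))
        from Finset.sum_congr rfl fun j _ => by simp [Pi.sub_apply]; ring,
      Finset.sum_sub_distrib, Finset.sum_add_distrib, ← Finset.mul_sum]
    simp only [dotp]; ring
  have h1 := hadd.2
  have h2 := hsub.1
  nlinarith [hadd.2, hsub.1]

lemma supp_smul_subset {n : ℕ} (a : ℝ) (u : Fin n → ℝ) : supp (a • u) ⊆ supp u := by
  intro j hj
  simp only [supp, Finset.mem_filter, Finset.mem_univ, true_and, Pi.smul_apply,
    smul_eq_mul] at *
  intro h0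
  simp [h0] at hj

lemma supp_restr_subset {n : ℕ} (Γ : Finset (Fin n)) (y : Fin n → ℝ) :
    supp (restr Γ y) ⊆ Γ := by
  intro j hj
  simp only [supp, restr, Finset.mem_filter, Finset.mem_univ, true_and] at hj
  by_contra h
  simp [h] at hj

lemma dotp_smul_smul {n : ℕ} (a b : ℝ) (u v : Fin n → ℝ) :
    dotp (a • u) (b • v) = a * b * dotp u v := by
  simp only [dotp, Pi.smul_apply, smul_eq_mul, Finset.mul_sum]
  exact Finset.sum_congr rfl fun j _ => by ring

lemma sum_sq_smul {n : ℕ} (a : ℝ) (u : Fin n → ℝ) :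
    ∑ j, (a • u) j ^ 2 = a ^ 2 * ∑ j, u j ^ 2 := by
  simp only [Pi.smul_apply, smul_eq_mul, Finset.mul_sum]
  exact Finset.sum_congr rfl fun j _ => by ring

lemma mulVec_smul' {M N : ℕ} (Ψ : Matrix (Fin M) (Fin N) ℝ) (a : ℝ) (u : Fin N → ℝ) :
    Ψ.mulVec (a • u) = a • Ψ.mulVec u := by
  funext i
  simp only [mulVec, dotProduct, Pi.smul_apply, smul_eq_mul, Finset.mul_sum]
  exact Finset.sum_congr rfl fun j _ => by ring

set_option maxHeartbeats 1000000 in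
/-- Proposition 3.2(1) of ROMP. -/
theorem stmt10 {M N : ℕ} (Ψ : Matrix (Fin M) (Fin N) ℝ) (δ : ℝ) (Γ : Finset (Fin N))
    (x : Fin N → ℝ) (hRIP : RIP (supp x ∪ Γ).card Ψ δ) :
    l2 (restr Γ (Ψᵀ.mulVec (Ψ.mulVec x) - x)) ≤ δ * l2 x := by
  have hδ0 := hRIP.1
  set y : Fin N → ℝ := Ψᵀ.mulVec (Ψ.mulVec x) - x with hy
  set w : Fin N → ℝ := restr Γ y with hw
  -- key identity : ⟨Ψw, Ψx⟩ - ⟨w, x⟩ = ∑ w²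
  have hSw : dotp (Ψ.mulVec w) (Ψ.mulVec x) - dotp w x = ∑ j, w j ^ 2 := by
    have h1 : dotp w y = ∑ j, w j ^ 2 := by
      apply Finset.sum_congr rfl
      intro j _
      by_cases hj : j ∈ Γ <;> simp [hw, restr, hj] <;> ring
    have h2 : dotp w y = dotp w (Ψᵀ.mulVec (Ψ.mulVec x)) - dotp w x := by
      simp only [hy, dotp, Pi.sub_apply, mul_sub]
      rw [Finset.sum_sub_distrib]
    rw [dotp_transpose] at h2
    linarith [h1, h2.symm]
  by_cases hW : l2 w = 0
  · rw [hW]; exact mul_nonneg hδ0.le (l2_nonneg x)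
  by_cases hX : l2 x = 0
  · exfalso
    have hx0 : x = 0 := by
      funext j
      have h0 : (∑ j, x j ^ 2) = 0 := by rw [← l2_sq, hX]; ring
      have := (Finset.sum_eq_zero_iff_of_nonneg (fun j _ => sq_nonneg (x j))).1 h0 j
        (Finset.mem_univ j)
      exact (pow_eq_zero_iff two_ne_zero).mp this
    apply hW
    rw [hw, hy, hx0]
    simp [l2, restr, Matrix.mulVec_zero]
  have hWpos : 0 < l2 w := lt_of_le_of_ne (l2_nonneg w) (Ne.symm hW)
  have hXpos : 0 < l2 x := lt_of_le_of_ne (l2_nonneg x) (Ne.symm hX)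
  set W := l2 w with hWdef
  set X := l2 x with hXdef
  set a := Real.sqrt (X / W) with ha
  set b := Real.sqrt (W / X) with hb
  have hab : a * b = 1 := by
    rw [ha, hb, ← Real.sqrt_mul (div_nonneg hXpos.le hWpos.le),
      show X / W * (W / X) = 1 by field_simp]
    exact Real.sqrt_one
  have ha2 : a ^ 2 = X / W := Real.sq_sqrt (div_nonneg hXpos.le hWpos.le)
  have hb2 : b ^ 2 = W / X := Real.sq_sqrt (div_nonneg hWpos.le hXpos.le)
  have hcard : (supp (a • w) ∪ supp (b • x)).card ≤ (supp x ∪ Γ).card := by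
    apply Finset.card_le_card
    apply Finset.union_subset
    · exact ((supp_smul_subset a w).trans (supp_restr_subset Γ y)).trans
        Finset.subset_union_right
    · exact (supp_smul_subset b x).trans Finset.subset_union_left
  have hp := polar Ψ δ hRIP (a • w) (b • x) hcard
  rw [mulVec_smul', mulVec_smul', dotp_smul_smul, dotp_smul_smul, hab, one_mul, one_mul,
    sum_sq_smul, sum_sq_smul, ha2, hb2, hSw] at hp
  have hw2 : (∑ j, w j ^ 2) = W ^ 2 := (l2_sq w).symm
  have hx2 : (∑ j, x j ^ 2) = X ^ 2 := (l2_sq x).symm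
  rw [hw2, hx2] at hp
  have e : X / W * W ^ 2 + W / X * X ^ 2 = 2 * (W * X) := by
    field_simp
    ring
  rw [e] at hp
  -- hp : W ^ 2 ≤ δ * (2 * (W * X)) / 2
  nlinarith [hp, hWpos, hXpos]

end OMP
end
end
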